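/- (Reed–Solomon codes are MDS) Let F_q be a finite field with q elements, n = q - 1, and let α be a generator of the multiplicative group F_q^*. Fix 1 ≤ δ ≤ n and let g(x) = ∏_{i=1}^{δ-1} (x - α^i) ∈ F_q[x]. Let C ⊆ F_q^n be the cyclic code corresponding (under the F_q-linear bijection π : F_q^n → F_q[x]/(x^n - 1) sending (c_0, ..., c_{n-1}) to the class of c_0 + c_1 x + ... + c_{n-1} x^{n-1}) to the ideal generated by the class of g(x). Then C is a linear code of dimension k = n - δ + 1 and minimum distance d(C) = δ = n - k + 1; that is, C attains the Singleton bound. -/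

import Mathlib

open Polynomial

section helpers
variable {F : Type*} [Field F]

/-- polynomial from coefficient vector -/
noncomputable def vp (m : ℕ) (c : Fin m → F) : F[X] := ∑ i : Fin m, C (c i) * X ^ (i : ℕ)

lemma vp_coeff (m : ℕ) (c : Fin m → F) (j : ℕ) :
    (vp m c).coeff j = if h : j < m then c ⟨j, h⟩ else 0 := by
  classical
  simp only [vp, finset_sum_coeff, coeff_C_mul, coeff_X_pow, mul_ite, mul_one, mul_zero]
  split
  · next h =>
    rw [Finset.sum_eq_single (⟨j, h⟩ : Fin m)]
    · simp
    · intro b _ hb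
      simp only [ite_eq_right_iff]
      intro hjb
      exact absurd (Fin.ext hjb.symm) hb
    · simp
  · next h =>
    apply Finset.sum_eq_zero
    intro i _
    simp only [ite_eq_right_iff]
    intro hj
    exact absurd (hj ▸ i.isLt) h

lemma natDegree_vp_lt (m : ℕ) (hm : 0 < m) (c : Fin m → F) : (vp m c).natDegree < m := by
  have := Polynomial.natDegree_sum_le Finset.univ (fun i : Fin m => C (c i) * X ^ (i : ℕ))
  refine lt_of_le_of_lt this ?_
  rw [Finset.fold_max_lt]
  refine ⟨hm, fun i _ => ?_⟩
  calc (C (c i) * X ^ (i : ℕ)).natDegree ≤ (C (c i)).natDegree + (X ^ (i:ℕ) : F[X]).natDegree :=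
        natDegree_mul_le
    _ < m := by simp [natDegree_X_pow, i.isLt]

lemma vp_eq_self (m : ℕ) (p : F[X]) (hp : p.natDegree < m) :
    vp m (fun i => p.coeff (i : ℕ)) = p := by
  ext j
  rw [vp_coeff]
  split
  · rfl
  · next h => exact (coeff_eq_zero_of_natDegree_lt (by omega)).symm

lemma vp_eq_zero_iff (m : ℕ) (c : Fin m → F) : vp m c = 0 ↔ c = 0 := by
  constructor
  · intro h
    funext i
    have := vp_coeff m c i
    rw [h] at this
    simpa [i.isLt] using this.symm
  · rintro rfl
    simp [vp]

lemma vp_add (m : ℕ) (a b : Fin m → F) : vp m (a + b) = vp m a + vp m b := by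
  ext j
  simp only [vp_coeff, coeff_add]
  split <;> simp

lemma vp_smul (m : ℕ) (r : F) (a : Fin m → F) : vp m (r • a) = C r * vp m a := by
  ext j
  simp only [vp_coeff, coeff_C_mul]
  split <;> simp

lemma eval_vp (m : ℕ) (c : Fin m → F) (x : F) :
    (vp m c).eval x = ∑ i : Fin m, c i * x ^ (i : ℕ) := by
  simp [vp, eval_finset_sum]

end helpers

lemma bch {F : Type*} [Field F] [DecidableEq F] (n : ℕ) (α : Fˣ) (hord : orderOf α = n)
    (c : Fin n → F) (hc0 : c ≠ 0)
    (hev : ∀ j : ℕ, 1 ≤ j → j ≤ hammingNorm c → (vp n c).eval ((α : F) ^ j) = 0) : False := by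
  classical
  set w := hammingNorm c with hw
  set s : Finset (Fin n) := {i | c i ≠ 0} with hs
  have hcard : s.card = w := rfl
  set eqv : Fin w ≃ s := (Finset.equivFinOfCardEq hcard).symm with heqv
  set ι : Fin w → Fin n := fun t => ((eqv t : s) : Fin n) with hι
  have hιmem : ∀ t, ι t ∈ s := fun t => (eqv t).2
  have hιinj : Function.Injective ι :=
    Subtype.coe_injective.comp eqv.injective
  set v : Fin w → F := fun t => (α : F) ^ ((ι t : Fin n) : ℕ) with hv
  have hvinj : Function.Injective v := by
    intro t t' htt
    apply hιinj
    have : (α ^ ((ι t : Fin n) : ℕ) : Fˣ) = α ^ ((ι t' : Fin n) : ℕ) :=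
      Units.ext (by simpa using htt)
    have := pow_injOn_Iio_orderOf (x := α) (by rw [hord]; exact (ι t).isLt)
      (by rw [hord]; exact (ι t').isLt) this
    exact Fin.ext this
  have hv0 : ∀ t, v t ≠ 0 := fun t => pow_ne_zero _ (Units.ne_zero α)
  set M : Matrix (Fin w) (Fin w) F := Matrix.of fun j t => v t ^ ((j : ℕ) + 1) with hM
  have hMdet : M.det ≠ 0 := by
    have hfac : M = (Matrix.vandermonde v).transpose * Matrix.diagonal v := by
      ext j t
      rw [Matrix.mul_diagonal, Matrix.transpose_apply, Matrix.vandermonde_apply]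
      simp [hM, pow_succ]
    rw [hfac, Matrix.det_mul, Matrix.det_transpose, Matrix.det_diagonal]
    exact mul_ne_zero (Matrix.det_vandermonde_ne_zero_iff.mpr hvinj)
      (Finset.prod_ne_zero_iff.mpr fun t _ => hv0 t)
  have hM0 : M.mulVec (fun t => c (ι t)) = 0 := by
    funext j
    have h1 : M.mulVec (fun t => c (ι t)) j
        = ∑ t : Fin w, c (ι t) * ((α : F) ^ ((j : ℕ) + 1)) ^ ((ι t : Fin n) : ℕ) := by
      simp only [Matrix.mulVec, dotProduct, hM, Matrix.of_apply]
      refine Finset.sum_congr rfl fun t _ => ?_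
      rw [hv, ← pow_mul, mul_comm ((ι t : Fin n) : ℕ), pow_mul, mul_comm]
    have h2 : ∑ t : Fin w, c (ι t) * ((α : F) ^ ((j : ℕ) + 1)) ^ ((ι t : Fin n) : ℕ)
        = ∑ i ∈ s, c i * ((α : F) ^ ((j : ℕ) + 1)) ^ (i : ℕ) := by
      rw [← Finset.sum_attach s (fun i => c i * ((α : F) ^ ((j : ℕ) + 1)) ^ (i : ℕ))]
      exact Fintype.sum_equiv eqv _ _ (fun t => rfl)
    have h3 : ∑ i ∈ s, c i * ((α : F) ^ ((j : ℕ) + 1)) ^ (i : ℕ)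
        = ∑ i : Fin n, c i * ((α : F) ^ ((j : ℕ) + 1)) ^ (i : ℕ) := by
      refine Finset.sum_subset (Finset.subset_univ s) fun i _ hi => ?_
      have : c i = 0 := by
        by_contra h
        exact hi (by simp [hs, h])
      rw [this, zero_mul]
    rw [h1, h2, h3, ← eval_vp, hev ((j : ℕ) + 1) (by omega) (by omega)]
    rfl
  have hzero := Matrix.eq_zero_of_mulVec_eq_zero hMdet hM0
  obtain ⟨i, hi'⟩ := Function.ne_iff.mp hc0
  have hi : c i ≠ 0 := hi'
  have him : i ∈ s := by simp [hs, hi]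
  have : c (ι (eqv.symm ⟨i, him⟩)) = 0 := congrFun hzero _
  rw [hι] at this
  simp only [heqv] at this
  rw [Equiv.apply_symm_apply] at this
  exact hi this

/-- The map `π : F^n → F[x]/(x^n - 1)` sending `(c_0, …, c_{n-1})` to the residue class of
`c_0 + c_1 x + ⋯ + c_{n-1} x^{n-1}`. -/
noncomputable def polyOfVec (F : Type*) [Field F] (n : ℕ) (c : Fin n → F) :
    AdjoinRoot (X ^ n - 1 : F[X]) :=
  AdjoinRoot.mk (X ^ n - 1 : F[X]) (∑ i : Fin n, C (c i) * X ^ (i : ℕ))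

/-- Reed–Solomon codes are MDS: For `F_q` a finite field, `n = q - 1`, `α` a
generator of `F_q^*`, `1 ≤ δ ≤ n` and `g(x) = ∏_{i=1}^{δ-1} (x - α^i)`, the cyclic code
`C = π⁻¹(⟨g⟩) ⊆ F_q^n` is a linear code of dimension `k = n - δ + 1` and minimum distance
`d(C) = δ = n - k + 1`, i.e. it attains the Singleton bound. -/
theorem reed_solomon_mds {F : Type*} [Field F] [Fintype F] [DecidableEq F]
    (n : ℕ) (hn : n = Fintype.card F - 1) (hn0 : 0 < n)
    (α : Fˣ) (hα : Subgroup.zpowers α = ⊤)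
    (δ : ℕ) (hδ1 : 1 ≤ δ) (hδn : δ ≤ n)
    (Code : Set (Fin n → F))
    (hCode : Code = {c : Fin n → F | polyOfVec F n c ∈
      Ideal.span {AdjoinRoot.mk (X ^ n - 1 : F[X])
        (∏ i ∈ Finset.Icc 1 (δ - 1), (X - C ((α : F) ^ i)))}}) :
    ∃ Csub : Submodule F (Fin n → F), (Csub : Set (Fin n → F)) = Code ∧
      Module.finrank F Csub = n - δ + 1 ∧
      sInf {k : ℕ | ∃ u ∈ Code, ∃ v ∈ Code, u ≠ v ∧ hammingDist u v = k} = δ ∧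
      δ = n - (n - δ + 1) + 1 := by
  classical
  set g : F[X] := ∏ i ∈ Finset.Icc 1 (δ - 1), (X - C ((α : F) ^ i)) with hg
  set k := n - δ + 1 with hk
  have hk1 : 1 ≤ k := by omega
  -- order of α
  have hαord : orderOf α = n := by
    rw [orderOf_eq_card_of_forall_mem_zpowers (fun x => hα ▸ Subgroup.mem_top x),
      Nat.card_units, Nat.card_eq_fintype_card, hn]
  have hαn : (α : F) ^ n = 1 := by
    have : α ^ n = 1 := by rw [← hαord]; exact pow_orderOf_eq_one α
    simpa using congrArg Units.val this
  have hpow : ∀ i < n, ∀ j < n, (α : F) ^ i = (α : F) ^ j → i = j := by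
    intro i hi j hj hij
    exact pow_injOn_Iio_orderOf (x := α) (by rwa [hαord]) (by rwa [hαord])
      (Units.ext (by simpa using hij))
  -- facts about g
  have hgmonic : g.Monic := monic_prod_of_monic _ _ fun i _ => monic_X_sub_C _
  have hg0 : g ≠ 0 := hgmonic.ne_zero
  have hgdeg : g.natDegree = δ - 1 := by
    rw [hg, natDegree_prod_of_monic _ _ fun i _ => monic_X_sub_C _]
    simp only [natDegree_X_sub_C]
    rw [Finset.sum_const, Nat.card_Icc, smul_eq_mul, mul_one]
    omega
  have hgroot : ∀ j : ℕ, 1 ≤ j → j ≤ δ - 1 → g.eval ((α : F) ^ j) = 0 := by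
    intro j h1 h2
    rw [hg, eval_prod]
    exact Finset.prod_eq_zero (Finset.mem_Icc.mpr ⟨h1, h2⟩) (by simp)
  have hgdvd : g ∣ X ^ n - 1 := by
    rw [hg]
    have h1 : (X ^ n - 1 : F[X]) = X ^ n - C 1 := by rw [map_one]
    apply Finset.prod_dvd_of_coprime
    · intro i hi j hj hij
      simp only [Finset.coe_Icc, Set.mem_Icc] at hi hj
      have hne : (α : F) ^ i ≠ (α : F) ^ j := by
        intro h
        exact hij (hpow i (by omega) j (by omega) h)
      exact isCoprime_X_sub_C_of_isUnit_sub (sub_ne_zero_of_ne hne).isUnit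
    · intro i hi
      rw [dvd_iff_isRoot]
      simp only [IsRoot, eval_sub, eval_pow, eval_X, eval_one]
      rw [← pow_mul, mul_comm i n, pow_mul, hαn, one_pow, sub_self]
  -- membership characterization
  have hmem : ∀ c : Fin n → F, c ∈ Code ↔ g ∣ vp n c := by
    intro c
    rw [hCode]
    simp only [Set.mem_setOf_eq]
    have hpoly : polyOfVec F n c = AdjoinRoot.mk _ (vp n c) := rfl
    rw [hpoly, Ideal.mem_span_singleton]
    constructor
    · rintro ⟨b, hb⟩
      obtain ⟨a, rfl⟩ := AdjoinRoot.mk_surjective b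
      rw [← map_mul, AdjoinRoot.mk_eq_mk] at hb
      obtain ⟨t, ht⟩ := hb
      have hvpc : vp n c = g * a + (X ^ n - 1) * t := by
        rw [← ht]; ring
      rw [hvpc]
      exact dvd_add (Dvd.intro _ rfl) (hgdvd.mul_right _)
    · rintro ⟨H, hH⟩
      exact ⟨AdjoinRoot.mk _ H, by rw [← map_mul, ← hH]⟩
  -- the evaluation vanishing for codewords
  have heval : ∀ c : Fin n → F, c ∈ Code → ∀ j : ℕ, 1 ≤ j → j ≤ δ - 1 →
      (vp n c).eval ((α : F) ^ j) = 0 := by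
    intro c hc j h1 h2
    obtain ⟨H, hH⟩ := (hmem c).mp hc
    rw [hH, eval_mul, hgroot j h1 h2, zero_mul]
  -- the key lower bound
  have key : ∀ c : Fin n → F, c ∈ Code → c ≠ 0 → δ ≤ hammingNorm c := by
    intro c hc hc0
    by_contra hlt
    push_neg at hlt
    exact bch n α hαord c hc0 (fun j h1 h2 => heval c hc j h1 (by omega))
  -- the linear map realizing the code
  let W : (Fin k → F) →ₗ[F] (Fin n → F) :=
    { toFun := fun h i => (g * vp k h).coeff (i : ℕ)
      map_add' := by
        intro a b
        funext i
        simp [vp_add, mul_add, coeff_add]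
      map_smul' := by
        intro r a
        funext i
        simp only [vp_smul, RingHom.id_apply, Pi.smul_apply, smul_eq_mul]
        rw [mul_left_comm, coeff_C_mul] }
  have hWapp : ∀ (h : Fin k → F) (i : Fin n), W h i = (g * vp k h).coeff (i : ℕ) := fun _ _ => rfl
  have hWdeg : ∀ h : Fin k → F, (g * vp k h).natDegree < n := by
    intro h
    by_cases h0 : vp k h = 0
    · rw [h0, mul_zero]; simpa using hn0
    · rw [natDegree_mul hg0 h0, hgdeg]
      have := natDegree_vp_lt k (by omega) h
      omega
  have hWinj : Function.Injective W := by
    intro a b hab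
    have hsub : W (a - b) = 0 := by rw [map_sub, hab, sub_self]
    have hz : g * vp k (a - b) = 0 := by
      by_contra hne
      have hlc := mt leadingCoeff_eq_zero.mp hne
      apply hlc
      have hdeg := hWdeg (a - b)
      have := congrFun hsub (⟨(g * vp k (a - b)).natDegree, hdeg⟩ : Fin n)
      rw [hWapp] at this
      exact this
    rcases mul_eq_zero.mp hz with h | h
    · exact absurd h hg0
    · exact sub_eq_zero.mp ((vp_eq_zero_iff k (a - b)).mp h)
  have hset : ((LinearMap.range W : Submodule F (Fin n → F)) : Set (Fin n → F)) = Code := by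
    ext c
    simp only [SetLike.mem_coe, LinearMap.mem_range]
    constructor
    · rintro ⟨h, rfl⟩
      rw [hmem]
      have : vp n (W h) = g * vp k h := by
        have h2 := vp_eq_self n (g * vp k h) (hWdeg h)
        exact h2
      rw [this]
      exact dvd_mul_right g _
    · intro hc
      obtain ⟨H, hH⟩ := (hmem c).mp hc
      by_cases h0 : vp n c = 0
      · refine ⟨0, ?_⟩
        rw [map_zero]
        exact ((vp_eq_zero_iff n c).mp h0).symm
      · have hH0 : H ≠ 0 := by
          rintro rfl
          rw [mul_zero] at hH
          exact h0 hH
        have hdH : H.natDegree < k := by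
          have h1 : (vp n c).natDegree < n := natDegree_vp_lt n hn0 c
          rw [hH, natDegree_mul hg0 hH0, hgdeg] at h1
          omega
        refine ⟨fun j => H.coeff (j : ℕ), ?_⟩
        funext i
        rw [hWapp, vp_eq_self k H hdH, ← hH, vp_coeff]
        simp [i.isLt]
  refine ⟨LinearMap.range W, hset, ?_, ?_, by omega⟩
  · rw [LinearMap.finrank_range_of_inj hWinj, Module.finrank_fin_fun]
  · -- minimum distance
    have h0C : (0 : Fin n → F) ∈ Code := by
      rw [hmem]
      rw [(vp_eq_zero_iff n 0).mpr rfl]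
      exact dvd_zero g
    set gc : Fin n → F := fun i => g.coeff (i : ℕ) with hgc
    have hgcC : gc ∈ Code := by
      rw [hmem]
      have : vp n gc = g := vp_eq_self n g (by omega)
      rw [this]
    have hgc0 : gc ≠ 0 := by
      intro h
      have : gc ⟨δ - 1, by omega⟩ = 0 := by rw [h]; rfl
      rw [hgc] at this
      simp only [← hgdeg] at this
      rw [hgmonic.coeff_natDegree] at this
      exact one_ne_zero this
    have hgcle : hammingNorm gc ≤ δ := by
      have hsub : ∀ i ∈ ({i : Fin n | gc i ≠ 0} : Finset (Fin n)),
          (i : ℕ) ∈ Finset.range δ := by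
        intro i hi
        simp only [Finset.mem_filter] at hi
        have := le_natDegree_of_ne_zero hi.2
        rw [hgdeg] at this
        exact Finset.mem_range.mpr (by omega)
      calc hammingNorm gc = ({i : Fin n | gc i ≠ 0} : Finset (Fin n)).card := rfl
        _ ≤ (Finset.range δ).card := Finset.card_le_card_of_injOn _ hsub
            (Fin.val_injective.injOn)
        _ = δ := Finset.card_range δ
    have hgcnorm : hammingNorm gc = δ := le_antisymm hgcle (key gc hgcC hgc0)
    have hδS : δ ∈ {k : ℕ | ∃ u ∈ Code, ∃ v ∈ Code, u ≠ v ∧ hammingDist u v = k} :=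
      ⟨gc, hgcC, 0, h0C, hgc0, by rw [hammingDist_zero_right, hgcnorm]⟩
    refine le_antisymm (Nat.sInf_le hδS) (le_csInf ⟨δ, hδS⟩ ?_)
    rintro m ⟨u, hu, v, hv, huv, rfl⟩
    rw [hammingDist_comm, hammingDist_eq_hammingNorm, neg_add_eq_sub]
    apply key (u - v) _ (sub_ne_zero.mpr huv)
    rw [← hset] at hu hv ⊢
    exact (LinearMap.range W).sub_mem hu hv
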